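/- Let T > 0, r ≥ 1 and N ≥ 2 an integer. Then the stepsizes of the graded mesh satisfy h₂ ≤ r·2^{r−1}·h₁, and h_n ≤ 3^{r−1}·h_{n−1} for every n ∈ {3,…,N}. -/

import Mathlib

/-- The graded mesh point `t_n = T * (n/N)^r`. -/
noncomputable def gmesh (T r : ℝ) (N n : ℕ) : ℝ := T * ((n : ℝ) / (N : ℝ)) ^ r

lemma rpow_mvt (r : ℝ) (hr : 1 ≤ r) {a b : ℝ} (hab : a < b) :
    ∃ c ∈ Set.Ioo a b, b ^ r - a ^ r = r * c ^ (r - 1) * (b - a) := by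
  have hcont : ContinuousOn (fun x : ℝ => x ^ r) (Set.Icc a b) :=
    (continuous_iff_continuousAt.mpr fun x =>
      (Real.hasDerivAt_rpow_const (Or.inr hr)).continuousAt).continuousOn
  obtain ⟨c, hc, hceq⟩ := exists_hasDerivAt_eq_slope (fun x : ℝ => x ^ r)
    (fun x => r * x ^ (r - 1)) hab hcont
    (fun x _ => Real.hasDerivAt_rpow_const (Or.inr hr))
  refine ⟨c, hc, ?_⟩
  have hb : b - a ≠ 0 := by linarith
  field_simp at hceq
  linarith [hceq]

lemma rpow_sub_le (r : ℝ) (hr : 1 ≤ r) {a b : ℝ} (ha : 0 ≤ a) (hab : a ≤ b) :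
    b ^ r - a ^ r ≤ r * b ^ (r - 1) * (b - a) := by
  rcases hab.eq_or_lt with h | h
  · simp [h]
  obtain ⟨c, hc, heq⟩ := rpow_mvt r hr h
  have hcb : c ^ (r - 1) ≤ b ^ (r - 1) :=
    Real.rpow_le_rpow (le_of_lt (ha.trans_lt hc.1)) hc.2.le (by linarith)
  have hrpos : (0:ℝ) ≤ r := by linarith
  rw [heq, mul_assoc, mul_assoc]
  exact mul_le_mul_of_nonneg_left
    (mul_le_mul_of_nonneg_right hcb (by linarith)) hrpos

lemma le_rpow_sub (r : ℝ) (hr : 1 ≤ r) {a b : ℝ} (ha : 0 ≤ a) (hab : a ≤ b) :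
    r * a ^ (r - 1) * (b - a) ≤ b ^ r - a ^ r := by
  rcases hab.eq_or_lt with h | h
  · simp [h]
  obtain ⟨c, hc, heq⟩ := rpow_mvt r hr h
  have hcb : a ^ (r - 1) ≤ c ^ (r - 1) :=
    Real.rpow_le_rpow ha hc.1.le (by linarith)
  have hrpos : (0:ℝ) ≤ r := by linarith
  rw [heq, mul_assoc, mul_assoc]
  exact mul_le_mul_of_nonneg_left
    (mul_le_mul_of_nonneg_right hcb (by linarith)) hrpos

/-- Consecutive stepsize comparison on the graded mesh (equation `eq.LaterStepFormerStep`). -/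
theorem stmt7 (T r : ℝ) (hT : 0 < T) (hr : 1 ≤ r) (N : ℕ) (hN : 2 ≤ N) :
    gmesh T r N 2 - gmesh T r N 1
      ≤ r * (2:ℝ) ^ (r - 1) * (gmesh T r N 1 - gmesh T r N 0) ∧
    ∀ n : ℕ, 3 ≤ n → n ≤ N →
      gmesh T r N n - gmesh T r N (n - 1)
        ≤ (3:ℝ) ^ (r - 1) * (gmesh T r N (n - 1) - gmesh T r N (n - 2)) := by
  have hNpos : (0:ℝ) < (N:ℝ) := by
    have : 0 < N := by omega
    exact_mod_cast this
  have hr1 : (0:ℝ) ≤ r - 1 := by linarith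
  constructor
  · -- first part
    have h0 : gmesh T r N 0 = 0 := by
      simp [gmesh, Real.zero_rpow (by linarith : r ≠ 0)]
    rw [h0, sub_zero]
    unfold gmesh
    push_cast
    have ha : (0:ℝ) < (1:ℝ)/N := by positivity
    have hab : (1:ℝ)/N ≤ (2:ℝ)/N := by gcongr <;> norm_num
    have key := rpow_sub_le r hr ha.le hab
    have hmul : ((2:ℝ)/N) ^ (r-1) = 2 ^ (r-1) * ((1:ℝ)/N) ^ (r-1) := by
      rw [show (2:ℝ)/N = 2 * ((1:ℝ)/N) by ring, Real.mul_rpow (by norm_num) ha.le]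
    have hpow : ((1:ℝ)/N) ^ (r-1) * ((1:ℝ)/N) = ((1:ℝ)/N) ^ r := by
      nth_rewrite 2 [← Real.rpow_one ((1:ℝ)/N)]
      rw [← Real.rpow_add ha]
      norm_num
    have hdiff : (2:ℝ)/N - (1:ℝ)/N = (1:ℝ)/N := by ring
    rw [hmul, hdiff] at key
    calc T * ((2:ℝ)/N) ^ r - T * ((1:ℝ)/N) ^ r
        = T * (((2:ℝ)/N) ^ r - ((1:ℝ)/N) ^ r) := by ring
      _ ≤ T * (r * (2 ^ (r-1) * ((1:ℝ)/N) ^ (r-1)) * ((1:ℝ)/N)) :=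
          mul_le_mul_of_nonneg_left key hT.le
      _ = r * 2 ^ (r-1) * (T * (((1:ℝ)/N) ^ (r-1) * ((1:ℝ)/N))) := by ring
      _ = r * 2 ^ (r-1) * (T * ((1:ℝ)/N) ^ r) := by rw [hpow]
  · intro n h3 hnN
    unfold gmesh
    have h1n : 1 ≤ n := by omega
    have h2n : 2 ≤ n := by omega
    have hc1 : ((n - 1 : ℕ) : ℝ) = (n:ℝ) - 1 := by
      push_cast [Nat.cast_sub h1n]; ring
    have hc2 : ((n - 2 : ℕ) : ℝ) = (n:ℝ) - 2 := by
      push_cast [Nat.cast_sub h2n]; ring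
    rw [hc1, hc2]
    set a : ℝ := ((n:ℝ) - 1)/N with ha_def
    set b : ℝ := (n:ℝ)/N with hb_def
    set c : ℝ := ((n:ℝ) - 2)/N with hc_def
    have hn3 : (3:ℝ) ≤ (n:ℝ) := by exact_mod_cast h3
    have hcpos : (0:ℝ) ≤ c := div_nonneg (by linarith) hNpos.le
    have hapos : (0:ℝ) ≤ a := div_nonneg (by linarith) hNpos.le
    have hbpos : (0:ℝ) ≤ b := div_nonneg (by linarith) hNpos.le
    have hab : a ≤ b := by rw [ha_def, hb_def]; gcongr <;> linarith
    have hca : c ≤ a := by rw [ha_def, hc_def]; gcongr <;> linarith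
    have hba : b - a = 1/N := by rw [ha_def, hb_def]; field_simp; ring
    have hac : a - c = 1/N := by rw [ha_def, hc_def]; field_simp; ring
    have hup := rpow_sub_le r hr hapos hab
    have hlo := le_rpow_sub r hr hcpos hca
    rw [hba] at hup
    rw [hac] at hlo
    have hb3c : b ≤ 3 * c := by
      rw [hb_def, hc_def]
      rw [show (3:ℝ) * (((n:ℝ)-2)/N) = (3*((n:ℝ)-2))/N by ring]
      gcongr <;> linarith
    have hbc : b ^ (r-1) ≤ 3 ^ (r-1) * c ^ (r-1) := by
      calc b ^ (r-1) ≤ (3*c) ^ (r-1) := Real.rpow_le_rpow hbpos hb3c hr1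
        _ = 3 ^ (r-1) * c ^ (r-1) := Real.mul_rpow (by norm_num) hcpos
    have key3 : r * b ^ (r-1) * (1/N) ≤ 3 ^ (r-1) * (r * c ^ (r-1) * (1/N)) := by
      have h1 : r * b ^ (r-1) ≤ r * (3 ^ (r-1) * c ^ (r-1)) :=
        mul_le_mul_of_nonneg_left hbc (by linarith)
      calc r * b ^ (r-1) * (1/N) ≤ r * (3 ^ (r-1) * c ^ (r-1)) * (1/N) :=
            mul_le_mul_of_nonneg_right h1 (by positivity)
        _ = 3 ^ (r-1) * (r * c ^ (r-1) * (1/N)) := by ring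
    have h3r : (0:ℝ) ≤ (3:ℝ) ^ (r-1) := Real.rpow_nonneg (by norm_num) _
    calc T * b ^ r - T * a ^ r = T * (b ^ r - a ^ r) := by ring
      _ ≤ T * (r * b ^ (r-1) * (1/N)) := mul_le_mul_of_nonneg_left hup hT.le
      _ ≤ T * (3 ^ (r-1) * (r * c ^ (r-1) * (1/N))) :=
          mul_le_mul_of_nonneg_left key3 hT.le
      _ = 3 ^ (r-1) * (T * (r * c ^ (r-1) * (1/N))) := by ring
      _ ≤ 3 ^ (r-1) * (T * (a ^ r - c ^ r)) :=
          mul_le_mul_of_nonneg_left (mul_le_mul_of_nonneg_left hlo hT.le) h3r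
      _ = 3 ^ (r-1) * (T * a ^ r - T * c ^ r) := by ring
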